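/- Let G be a groupoid, and let f : C → A, g : C → B be functions between nonempty finite types with pushout P (so P = A ⊔ B quotiented by f c ∼ g c, with the canonical maps A → P and B → P, and P is nonempty finite). Then the commutative square of types obtained by applying S ↦ (functors from the codiscrete groupoid on S to G) and precomposition — i.e., the square with corners (Codiscrete P ⥤ G), (Codiscrete A ⥤ G), (Codiscrete B ⥤ G), (Codiscrete C ⥤ G) — is a pullback square in the category of types. -/

import Mathlib

open CategoryTheory

universe u v w

namespace CodiscretePullbackAux

open CategoryTheory.Limits

/-- The unique morphism in a codiscrete category, with explicit endpoints. -/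
def codHom {S : Type w} (s t : S) : (Codiscrete.mk s) ⟶ (Codiscrete.mk t) := ⟨⟩

variable {G : Type u} [Groupoid.{v} G]

lemma cod_map_comp {S : Type w} (F : Codiscrete S ⥤ G) (s t u' : S) :
    F.map (codHom s t) ≫ F.map (codHom t u') = F.map (codHom s u') :=
  (F.map_comp (codHom s t) (codHom t u')).symm

/-- A functor from a codiscrete category to a groupoid, from pointed data. -/
def mk' {S : Type w} (x0 : G) (Φ : S → Σ x : G, x0 ⟶ x) : Codiscrete S ⥤ G where
  obj s := (Φ s.as).1
  map {s t} _ := Groupoid.inv (Φ s.as).2 ≫ (Φ t.as).2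
  map_id s := by simp
  map_comp _ _ := by simp

lemma mk'_eq {S : Type w} (F : Codiscrete S ⥤ G) (s0 : S) :
    F = mk' (F.obj ⟨s0⟩) (fun s => ⟨F.obj ⟨s⟩, F.map (codHom s0 s)⟩) := by
  refine CategoryTheory.Functor.ext ?_ ?_
  · intro X; rfl
  · intro X Y f
    erw [eqToHom_refl, eqToHom_refl, Category.id_comp, Category.comp_id]
    show F.map f = Groupoid.inv (F.map (codHom s0 X.as)) ≫ F.map (codHom s0 Y.as)
    rw [← cod_map_comp F s0 X.as Y.as]
    simp
    rfl

lemma mk'_base {S : Type w} {x0 x1 : G} (h : x0 = x1) (Φ : S → Σ x : G, x1 ⟶ x) :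
    mk' x1 Φ = mk' x0 (fun s => ⟨(Φ s).1, eqToHom h ≫ (Φ s).2⟩) := by
  subst h
  exact congrArg (mk' x0) (funext fun s => by simp)

lemma sigma_eq {x0 X Y : G} (h : X = Y) (φ : x0 ⟶ X) (φ' : x0 ⟶ Y)
    (w : φ ≫ eqToHom h = φ') : (⟨X, φ⟩ : Σ x : G, x0 ⟶ x) = ⟨Y, φ'⟩ := by
  subst h; subst w; simp

lemma triple_eq {X Y X' Y' : G} (hX : X = X') (hY : Y = Y') (φ : X ⟶ Y) (φ' : X' ⟶ Y')
    (w : φ = eqToHom hX ≫ φ' ≫ eqToHom hY.symm) :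
    (⟨X, Y, φ⟩ : Σ x y : G, x ⟶ y) = ⟨X', Y', φ'⟩ := by
  subst hX hY; simp [w]

lemma of_triple {X X' Y Y' : G} {φ : X ⟶ Y} {φ' : X' ⟶ Y'}
    (t : (⟨X, Y, φ⟩ : Σ x y : G, x ⟶ y) = ⟨X', Y', φ'⟩) (h : X = X') :
    (⟨Y, φ⟩ : Σ y : G, X ⟶ y) = ⟨Y', eqToHom h ≫ φ'⟩ := by
  subst h
  injection t with _ t2
  simpa using t2

lemma triple_restrict {S P : Type u} (u' : S → P) (F F' : Codiscrete P ⥤ G)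
    (hres : Codiscrete.functor (fun x : Codiscrete S => u' x.as) ⋙ F
      = Codiscrete.functor (fun x : Codiscrete S => u' x.as) ⋙ F') (s t : S) :
    (⟨F.obj ⟨u' s⟩, F.obj ⟨u' t⟩, F.map (codHom (u' s) (u' t))⟩ : Σ x y : G, x ⟶ y)
      = ⟨F'.obj ⟨u' s⟩, F'.obj ⟨u' t⟩, F'.map (codHom (u' s) (u' t))⟩ :=
  triple_eq (Functor.congr_obj hres ⟨s⟩) (Functor.congr_obj hres ⟨t⟩) _ _
    (Functor.congr_hom hres (codHom s t))

end CodiscretePullbackAux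

open CategoryTheory.Limits CodiscretePullbackAux

/-- For a groupoid `G`, the functor `S ↦ (Codiscrete S ⥤ G)` turns
pushouts of nonempty finite types into pullbacks of types: if `P` is a pushout of
`f : C → A` and `g : C → B` (all types nonempty and finite), then the square of
precomposition maps between the types of functors from the codiscrete groupoids to `G`
is a pullback square in the category of types. -/
theorem codiscrete_functors_isPullback_of_isPushout
    {G : Type u} [Groupoid.{v} G]
    {A B C P : Type u} [Finite A] [Nonempty A] [Finite B] [Nonempty B]
    [Finite C] [Nonempty C] [Finite P] [Nonempty P]
    (f : C → A) (g : C → B) (inl : A → P) (inr : B → P)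
    (hpo : IsPushout (C := Type u) (TypeCat.ofHom f) (TypeCat.ofHom g) (TypeCat.ofHom inl)
      (TypeCat.ofHom inr)) :
    IsPullback (C := Type (max u v))
      (TypeCat.ofHom fun F : Codiscrete P ⥤ G =>
        Codiscrete.functor (fun x : Codiscrete A => inl x.as) ⋙ F)
      (TypeCat.ofHom fun F : Codiscrete P ⥤ G =>
        Codiscrete.functor (fun x : Codiscrete B => inr x.as) ⋙ F)
      (TypeCat.ofHom fun F : Codiscrete A ⥤ G =>
        Codiscrete.functor (fun x : Codiscrete C => f x.as) ⋙ F)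
      (TypeCat.ofHom fun F : Codiscrete B ⥤ G =>
        Codiscrete.functor (fun x : Codiscrete C => g x.as) ⋙ F) := by
  obtain ⟨c0⟩ := ‹Nonempty C›
  -- basic pushout facts
  have hm : inl (f c0) = inr (g c0) := ConcreteCategory.congr_hom hpo.w c0
  have hColim := hpo.isColimit
  let e : P ≅ Types.Pushout (TypeCat.ofHom f) (TypeCat.ofHom g) :=
    hColim.coconePointUniqueUpToIso (Types.Pushout.isColimitCocone _ _)
  have he_l : ∀ a : A, e.hom (inl a) = Quot.mk _ (Sum.inl a) := by
    intro a
    exact ConcreteCategory.congr_hom (hColim.comp_coconePointUniqueUpToIso_hom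
      (Types.Pushout.isColimitCocone _ _) WalkingSpan.left) a
  have he_r : ∀ b : B, e.hom (inr b) = Quot.mk _ (Sum.inr b) := by
    intro b
    exact ConcreteCategory.congr_hom (hColim.comp_coconePointUniqueUpToIso_hom
      (Types.Pushout.isColimitCocone _ _) WalkingSpan.right) b
  have hsurj : ∀ p : P, (∃ a, inl a = p) ∨ (∃ b, inr b = p) := by
    intro p
    have hp : e.inv (e.hom p) = p := ConcreteCategory.congr_hom e.hom_inv_id p
    revert hp
    generalize e.hom p = q
    induction q using Quot.ind with
    | _ x =>
      rcases x with x | x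
      · intro hp
        left
        refine ⟨x, ?_⟩
        calc inl x = e.inv (e.hom (inl x)) := (ConcreteCategory.congr_hom e.hom_inv_id (inl x)).symm
          _ = e.inv (Quot.mk _ (Sum.inl x)) := by rw [he_l x]
          _ = p := hp
      · intro hp
        right
        refine ⟨x, ?_⟩
        calc inr x = e.inv (e.hom (inr x)) := (ConcreteCategory.congr_hom e.hom_inv_id (inr x)).symm
          _ = e.inv (Quot.mk _ (Sum.inr x)) := by rw [he_r x]
          _ = p := hp
  -- the commutative square
  have w : (TypeCat.ofHom fun F : Codiscrete P ⥤ G =>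
        Codiscrete.functor (fun x : Codiscrete A => inl x.as) ⋙ F) ≫
      (TypeCat.ofHom fun F : Codiscrete A ⥤ G =>
        Codiscrete.functor (fun x : Codiscrete C => f x.as) ⋙ F) =
      (TypeCat.ofHom fun F : Codiscrete P ⥤ G =>
        Codiscrete.functor (fun x : Codiscrete B => inr x.as) ⋙ F) ≫
      (TypeCat.ofHom fun F : Codiscrete B ⥤ G =>
        Codiscrete.functor (fun x : Codiscrete C => g x.as) ⋙ F) := by
    ext F
    show Codiscrete.functor (fun x : Codiscrete C => inl (f x.as)) ⋙ F
      = Codiscrete.functor (fun x : Codiscrete C => inr (g x.as)) ⋙ F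
    rw [show (fun x : Codiscrete C => inl (f x.as)) = (fun x => inr (g x.as)) from
      funext fun x => ConcreteCategory.congr_hom hpo.w x.as]
  refine ⟨⟨w⟩, ⟨(PullbackCone.isLimitEquivBijective _).symm ⟨?_, ?_⟩⟩⟩
  · -- injectivity
    intro (F : Codiscrete P ⥤ G) (F' : Codiscrete P ⥤ G) hFF'
    have hA : Codiscrete.functor (fun x : Codiscrete A => inl x.as) ⋙ F
        = Codiscrete.functor (fun x : Codiscrete A => inl x.as) ⋙ F' :=
      congrArg (fun t => t.1.1) hFF'
    have hB : Codiscrete.functor (fun x : Codiscrete B => inr x.as) ⋙ F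
        = Codiscrete.functor (fun x : Codiscrete B => inr x.as) ⋙ F' :=
      congrArg (fun t => t.1.2) hFF'
    have h0 : F.obj ⟨inl (f c0)⟩ = F'.obj ⟨inl (f c0)⟩ := Functor.congr_obj hA ⟨f c0⟩
    have key : ∀ p : P,
        (⟨F.obj ⟨inl (f c0)⟩, F.obj ⟨p⟩, F.map (codHom (inl (f c0)) p)⟩ : Σ x y : G, x ⟶ y)
          = ⟨F'.obj ⟨inl (f c0)⟩, F'.obj ⟨p⟩, F'.map (codHom (inl (f c0)) p)⟩ := by
      intro p
      rcases hsurj p with ⟨a, rfl⟩ | ⟨b, rfl⟩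
      · exact triple_restrict inl F F' hA (f c0) a
      · rw [hm]
        exact triple_restrict inr F F' hB (g c0) b
    calc F = mk' (F.obj ⟨inl (f c0)⟩)
          (fun p => ⟨F.obj ⟨p⟩, F.map (codHom (inl (f c0)) p)⟩) := mk'_eq F (inl (f c0))
      _ = mk' (F.obj ⟨inl (f c0)⟩)
          (fun p => ⟨F'.obj ⟨p⟩, eqToHom h0 ≫ F'.map (codHom (inl (f c0)) p)⟩) :=
            congrArg _ (funext fun p => of_triple (key p) h0)
      _ = mk' (F'.obj ⟨inl (f c0)⟩)
          (fun p => ⟨F'.obj ⟨p⟩, F'.map (codHom (inl (f c0)) p)⟩) :=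
            (mk'_base h0 (fun p => ⟨F'.obj ⟨p⟩, F'.map (codHom (inl (f c0)) p)⟩)).symm
      _ = F' := (mk'_eq F' (inl (f c0))).symm
  · -- surjectivity
    rintro ⟨⟨FA, FB⟩, hcomp⟩
    have hAB : Codiscrete.functor (fun x : Codiscrete C => f x.as) ⋙ FA
        = Codiscrete.functor (fun x : Codiscrete C => g x.as) ⋙ FB := hcomp
    have hobjAB : ∀ c : C, FA.obj ⟨f c⟩ = FB.obj ⟨g c⟩ := fun c => Functor.congr_obj hAB ⟨c⟩
    let ψA : A → Σ x : G, FA.obj ⟨f c0⟩ ⟶ x :=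
      fun a => ⟨FA.obj ⟨a⟩, FA.map (codHom (f c0) a)⟩
    let ψB : B → Σ x : G, FA.obj ⟨f c0⟩ ⟶ x :=
      fun b => ⟨FB.obj ⟨b⟩, eqToHom (hobjAB c0) ≫ FB.map (codHom (g c0) b)⟩
    have hψ : ∀ c : C, ψA (f c) = ψB (g c) := by
      intro c
      refine sigma_eq (hobjAB c) _ _ ?_
      have hh := Functor.congr_hom hAB (codHom c0 c)
      rw [show FA.map (codHom (f c0) (f c)) = _ from hh]
      simp
      erw [Category.assoc, Category.assoc, eqToHom_trans, eqToHom_refl, Category.comp_id]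
      rfl
    let Φ : P → Σ x : G, FA.obj ⟨f c0⟩ ⟶ x :=
      fun p => Quot.lift (Sum.elim ψA ψB) (by rintro x y ⟨c⟩; exact hψ c) (e.hom p)
    have hΦl : ∀ a : A, Φ (inl a) = ψA a := by
      intro a
      show Quot.lift _ _ (e.hom (inl a)) = _
      rw [he_l a]
      rfl
    have hΦr : ∀ b : B, Φ (inr b) = ψB b := by
      intro b
      show Quot.lift _ _ (e.hom (inr b)) = _
      rw [he_r b]
      rfl
    refine ⟨mk' (FA.obj ⟨f c0⟩) Φ, ?_⟩
    apply Subtype.ext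
    have fac1 : Codiscrete.functor (fun x : Codiscrete A => inl x.as) ⋙
        mk' (FA.obj ⟨f c0⟩) Φ = FA := by
      calc Codiscrete.functor (fun x : Codiscrete A => inl x.as) ⋙ mk' (FA.obj ⟨f c0⟩) Φ
          = mk' (FA.obj ⟨f c0⟩) (fun a => Φ (inl a)) := rfl
        _ = mk' (FA.obj ⟨f c0⟩) ψA := congrArg _ (funext hΦl)
        _ = FA := (mk'_eq FA (f c0)).symm
    have fac2 : Codiscrete.functor (fun x : Codiscrete B => inr x.as) ⋙
        mk' (FA.obj ⟨f c0⟩) Φ = FB := by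
      calc Codiscrete.functor (fun x : Codiscrete B => inr x.as) ⋙ mk' (FA.obj ⟨f c0⟩) Φ
          = mk' (FA.obj ⟨f c0⟩) (fun b => Φ (inr b)) := rfl
        _ = mk' (FA.obj ⟨f c0⟩) ψB := congrArg _ (funext hΦr)
        _ = mk' (FB.obj ⟨g c0⟩)
            (fun b => ⟨FB.obj ⟨b⟩, FB.map (codHom (g c0) b)⟩) :=
              (mk'_base (hobjAB c0) (fun b => ⟨FB.obj ⟨b⟩, FB.map (codHom (g c0) b)⟩)).symm
        _ = FB := (mk'_eq FB (g c0)).symm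
    exact Prod.ext fac1 fac2
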